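/- A bounded linear operator A on a nonzero complex Hilbert space is normaloid if and only if w₀(A) = w(A), where w₀(A) = sup{|z| : z ∈ W₀(A)} and w(A) is the numerical radius. -/

import Mathlib

open Filter Topology

/-- The numerical range `W(A) = {⟨Ax, x⟩ : ‖x‖ = 1}`. -/
def numRange {H : Type*} [NormedAddCommGroup H] [InnerProductSpace ℂ H]
    (A : H →L[ℂ] H) : Set ℂ :=
  {z | ∃ x : H, ‖x‖ = 1 ∧ (inner ℂ (A x) x : ℂ) = z}

/-- The maximal numerical range of a bounded linear operator `A` on a complex
Hilbert space: the set of `λ ∈ ℂ` for which there is a sequence of unit vectors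
`xₙ` with `‖A xₙ‖ → ‖A‖` and `⟨A xₙ, xₙ⟩ → λ`. -/
def maxNumRange {H : Type*} [NormedAddCommGroup H] [InnerProductSpace ℂ H]
    (A : H →L[ℂ] H) : Set ℂ :=
  {lam | ∃ x : ℕ → H, (∀ n, ‖x n‖ = 1) ∧
    Tendsto (fun n => ‖A (x n)‖) atTop (𝓝 ‖A‖) ∧
    Tendsto (fun n => (inner ℂ (A (x n)) (x n) : ℂ)) atTop (𝓝 lam)}

section helpers
variable {H : Type*} [NormedAddCommGroup H] [InnerProductSpace ℂ H] (A : H →L[ℂ] H)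

local notation "⟪" x ", " y "⟫" => (inner ℂ x y)

lemma abs_inner_le_norm_op (x : H) (hx : ‖x‖ = 1) : ‖⟪A x, x⟫‖ ≤ ‖A‖ := by
  calc ‖⟪A x, x⟫‖ = ‖⟪A x, x⟫‖ := rfl
    _ ≤ ‖A x‖ * ‖x‖ := norm_inner_le_norm _ _
    _ ≤ (‖A‖ * ‖x‖) * ‖x‖ := by
        gcongr; exact A.le_opNorm x
    _ = ‖A‖ := by rw [hx]; ring

lemma abs_mem_numRange_le {z : ℂ} (hz : z ∈ numRange A) : ‖z‖ ≤ ‖A‖ := by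
  obtain ⟨x, hx, rfl⟩ := hz
  exact abs_inner_le_norm_op A x hx

lemma numRange_nonempty [Nontrivial H] : (numRange A).Nonempty := by
  obtain ⟨x, hx⟩ := exists_norm_eq H (by norm_num : (0:ℝ) ≤ 1)
  exact ⟨_, x, hx, rfl⟩

lemma quad_bound {w : ℝ} (hb : ∀ x : H, ‖x‖ = 1 → ‖⟪A x, x⟫‖ ≤ w) (v : H) :
    ‖⟪A v, v⟫‖ ≤ w * ‖v‖ ^ 2 := by
  rcases eq_or_ne v 0 with rfl | hv
  · simp
  · have hnv : ‖v‖ ≠ 0 := norm_ne_zero_iff.mpr hv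
    set u : H := ((‖v‖ : ℂ))⁻¹ • v with hu
    have hu1 : ‖u‖ = 1 := by
      rw [hu, norm_smul]
      simp [norm_inv, hnv]
    have key := hb u hu1
    have : ⟪A u, u⟫ = ((‖v‖ : ℂ))⁻¹ * ((starRingEnd ℂ) ((‖v‖ : ℂ))⁻¹ * ⟪A v, v⟫) := by
      rw [hu]
      simp only [map_smul, inner_smul_left, inner_smul_right]
    rw [this] at key
    simp only [norm_mul, norm_inv, Complex.norm_conj, Complex.norm_real, Real.norm_eq_abs,
      abs_of_nonneg (norm_nonneg v)] at key
    have h2 : ‖⟪A v, v⟫‖ * (‖v‖⁻¹ * ‖v‖⁻¹) ≤ w := by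
      calc ‖⟪A v, v⟫‖ * (‖v‖⁻¹ * ‖v‖⁻¹)
          = ‖v‖⁻¹ * (‖v‖⁻¹ * ‖⟪A v, v⟫‖) := by ring
        _ ≤ w := key
    have hv2 : (0:ℝ) < ‖v‖ := norm_pos_iff.mpr hv
    calc ‖⟪A v, v⟫‖ = (‖⟪A v, v⟫‖ * (‖v‖⁻¹ * ‖v‖⁻¹)) * ‖v‖^2 := by
          have : ‖v‖ ^ 2 ≠ 0 := pow_ne_zero 2 hnv
          field_simp [sq]
      _ ≤ w * ‖v‖^2 := by nlinarith [sq_nonneg ‖v‖]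

lemma abs_mem_maxNumRange_le_of_bound {w : ℝ}
    (hb : ∀ x : H, ‖x‖ = 1 → ‖⟪A x, x⟫‖ ≤ w) {z : ℂ}
    (hz : z ∈ maxNumRange A) : ‖z‖ ≤ w := by
  obtain ⟨x, hx, _, hr⟩ := hz
  have habs : Tendsto (fun n => ‖⟪A (x n), x n⟫‖) atTop (𝓝 (‖z‖)) :=
    (continuous_norm.tendsto z).comp hr
  exact le_of_tendsto habs (Eventually.of_forall fun n => hb _ (hx n))

lemma abs_mem_maxNumRange_le {z : ℂ} (hz : z ∈ maxNumRange A) : ‖z‖ ≤ ‖A‖ :=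
  abs_mem_maxNumRange_le_of_bound A (fun x hx => abs_inner_le_norm_op A x hx) hz

end helpers

section helpers2
variable {H : Type*} [NormedAddCommGroup H] [InnerProductSpace ℂ H] (A : H →L[ℂ] H)

local notation "⟪" x ", " y "⟫" => (inner ℂ x y)

lemma one_div_succ_tendsto : Tendsto (fun n : ℕ => 1 / ((n:ℝ) + 1)) atTop (𝓝 0) :=
  tendsto_one_div_add_atTop_nhds_zero_nat

/-- existence of unit vectors nearly attaining the norm -/
lemma exists_unit_seq [Nontrivial H] :
    ∃ x : ℕ → H, (∀ n, ‖x n‖ = 1) ∧ Tendsto (fun n => ‖A (x n)‖) atTop (𝓝 ‖A‖) := by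
  rcases eq_or_lt_of_le (norm_nonneg A) with hA0 | hA0
  · obtain ⟨x0, hx0⟩ := exists_norm_eq H (by norm_num : (0:ℝ) ≤ 1)
    refine ⟨fun _ => x0, fun _ => hx0, ?_⟩
    have : ∀ n : ℕ, ‖A x0‖ = ‖A‖ := by
      intro n
      have h1 : ‖A x0‖ ≤ ‖A‖ := by
        have := A.le_opNorm x0; rwa [hx0, mul_one] at this
      have h2 : 0 ≤ ‖A x0‖ := norm_nonneg _
      rw [← hA0] at h1 ⊢
      linarith
    simpa [this 0] using tendsto_const_nhds (α := ℝ) (f := atTop (α := ℕ))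
  · -- ‖A‖ > 0
    have key : ∀ n : ℕ, ∃ x : H, ‖x‖ = 1 ∧ ‖A‖ * (1 - 1/((n:ℝ)+1+1)) < ‖A x‖ := by
      intro n
      have hr : ‖A‖ * (1 - 1/((n:ℝ)+1+1)) < ‖A‖ := by
        have h1 : 0 < 1/((n:ℝ)+1+1) := by positivity
        nlinarith
      obtain ⟨z, hz1, hz2⟩ := A.exists_lt_apply_of_lt_opNorm hr
      have hz0 : z ≠ 0 := by
        rintro rfl
        simp at hz2
        have h1 : 1/((n:ℝ)+1+1) < 1 := by
          rw [div_lt_one (by positivity)]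
          have := Nat.cast_nonneg (α := ℝ) n
          linarith
        rw [one_div] at h1
        nlinarith
      have hnz : (0:ℝ) < ‖z‖ := norm_pos_iff.mpr hz0
      refine ⟨((‖z‖:ℂ))⁻¹ • z, ?_, ?_⟩
      · rw [norm_smul]; simp [hnz.ne']
      · rw [map_smul, norm_smul]
        simp only [norm_inv, Complex.norm_real, Real.norm_eq_abs,
          abs_of_nonneg (norm_nonneg z)]
        calc ‖A‖ * (1 - 1/((n:ℝ)+1+1)) < ‖A z‖ := hz2
          _ ≤ ‖z‖⁻¹ * ‖A z‖ := by
              have h1 : 1 ≤ ‖z‖⁻¹ := (one_le_inv₀ hnz).mpr (le_of_lt hz1)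
              nlinarith [norm_nonneg (A z)]
    choose x hx1 hx2 using key
    refine ⟨x, hx1, ?_⟩
    have hub : ∀ n, ‖A (x n)‖ ≤ ‖A‖ := fun n => by
      have := A.le_opNorm (x n); rwa [hx1 n, mul_one] at this
    have hlb : Tendsto (fun n : ℕ => ‖A‖ * (1 - 1/((n:ℝ)+1+1))) atTop (𝓝 (‖A‖ * (1 - 0))) := by
      apply Tendsto.const_mul
      apply Tendsto.const_sub
      have h2 : Tendsto (fun n : ℕ => ((n:ℝ)+1+1)) atTop atTop :=
        tendsto_atTop_add_const_right _ 1 (tendsto_atTop_add_const_right _ 1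
          tendsto_natCast_atTop_atTop)
      simpa [one_div, Pi.inv_def] using h2.inv_tendsto_atTop
    rw [mul_sub, mul_zero, sub_zero, mul_one] at hlb
    exact tendsto_of_tendsto_of_tendsto_of_le_of_le hlb tendsto_const_nhds
      (fun n => le_of_lt (hx2 n)) hub

/-- extraction of a maximal-numerical-range element from a norming sequence -/
lemma exists_mem_maxNumRange_of_seq (x : ℕ → H) (hx : ∀ n, ‖x n‖ = 1)
    (hA : Tendsto (fun n => ‖A (x n)‖) atTop (𝓝 ‖A‖)) :
    ∃ lam ∈ maxNumRange A, ∃ φ : ℕ → ℕ, StrictMono φ ∧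
      Tendsto (fun n => ⟪A (x (φ n)), x (φ n)⟫) atTop (𝓝 lam) := by
  have hbdd : ∀ n, (⟪A (x n), x n⟫) ∈ Metric.closedBall (0:ℂ) ‖A‖ := by
    intro n
    rw [Metric.mem_closedBall, dist_zero_right]
    exact abs_inner_le_norm_op A (x n) (hx n)
  obtain ⟨lam, _, φ, hφ, hlim⟩ :=
    tendsto_subseq_of_bounded Metric.isBounded_closedBall hbdd
  refine ⟨lam, ⟨x ∘ φ, fun n => hx _, hA.comp hφ.tendsto_atTop, hlim⟩, φ, hφ, hlim⟩

lemma maxNumRange_nonempty [Nontrivial H] : (maxNumRange A).Nonempty := by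
  obtain ⟨x, hx1, hx2⟩ := exists_unit_seq A
  obtain ⟨lam, hlam, -⟩ := exists_mem_maxNumRange_of_seq A x hx1 hx2
  exact ⟨lam, hlam⟩

/-- epsilon characterization of membership in the maximal numerical range -/
lemma mem_maxNumRange_iff (lam : ℂ) :
    lam ∈ maxNumRange A ↔ ∀ ε > (0:ℝ), ∃ x : H, ‖x‖ = 1 ∧
      |‖A x‖ - ‖A‖| < ε ∧ ‖(⟪A x, x⟫ - lam)‖ < ε := by
  constructor
  · rintro ⟨x, hx1, hx2, hx3⟩ ε hε
    have h2 : ∀ᶠ n in atTop, |‖A (x n)‖ - ‖A‖| < ε := by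
      have := Metric.tendsto_atTop.mp hx2 ε hε
      simpa [Real.dist_eq] using this
    have h3 : ∀ᶠ n in atTop, ‖(⟪A (x n), x n⟫ - lam)‖ < ε := by
      have := Metric.tendsto_atTop.mp hx3 ε hε
      simpa [Complex.dist_eq] using this
    obtain ⟨n, hn2, hn3⟩ := (h2.and h3).exists
    exact ⟨x n, hx1 n, hn2, hn3⟩
  · intro h
    have key : ∀ n : ℕ, ∃ x : H, ‖x‖ = 1 ∧
        |‖A x‖ - ‖A‖| < 1/((n:ℝ)+1) ∧ ‖(⟪A x, x⟫ - lam)‖ < 1/((n:ℝ)+1) := by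
      intro n
      exact h _ (by positivity)
    choose x hx1 hx2 hx3 using key
    refine ⟨x, hx1, ?_, ?_⟩
    · rw [tendsto_iff_dist_tendsto_zero]
      apply squeeze_zero (fun n => dist_nonneg)
        (fun n => by rw [Real.dist_eq]; exact le_of_lt (hx2 n)) one_div_succ_tendsto
    · rw [tendsto_iff_dist_tendsto_zero]
      apply squeeze_zero (fun n => dist_nonneg)
        (fun n => by rw [Complex.dist_eq]; exact le_of_lt (hx3 n)) one_div_succ_tendsto

lemma maxNumRange_mem_of_tendsto (z : ℕ → ℂ) (hz : ∀ n, z n ∈ maxNumRange A) {mu : ℂ}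
    (hlim : Tendsto z atTop (𝓝 mu)) : mu ∈ maxNumRange A := by
  rw [mem_maxNumRange_iff]
  intro ε hε
  obtain ⟨K, hK⟩ := Metric.tendsto_atTop.mp hlim (ε/2) (by linarith)
  have hn := hK K le_rfl
  set n := K
  obtain ⟨x, hx1, hx2, hx3⟩ := (mem_maxNumRange_iff A (z n)).mp (hz n) (ε/2) (by linarith)
  refine ⟨x, hx1, by linarith, ?_⟩
  calc ‖(⟪A x, x⟫ - mu)‖
      ≤ ‖(⟪A x, x⟫ - z n)‖ + ‖(z n - mu)‖ := by
        simpa using norm_sub_le_norm_sub_add_norm_sub (⟪A x, x⟫) (z n) mu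
    _ < ε/2 + ε/2 := by
        simp only [← Complex.dist_eq] at hx3 ⊢
        exact add_lt_add hx3 hn
    _ = ε := by ring

end helpers2

section core

lemma ofReal_to_complex (x : ℝ) : (@RCLike.ofReal ℂ _ x) = Complex.ofReal x := rfl

variable {H : Type*} [NormedAddCommGroup H] [InnerProductSpace ℂ H] [CompleteSpace H]

local notation "⟪" x ", " y "⟫" => (inner ℂ x y)

set_option maxHeartbeats 2000000 in
lemma core_lemma (A : H →L[ℂ] H) {w : ℝ} (hw : 0 ≤ w)
    (hmem : (w : ℂ) ∈ maxNumRange A)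
    (hb : ∀ v : H, ‖⟪A v, v⟫‖ ≤ w * ‖v‖ ^ 2) : ‖A‖ ≤ w := by
  by_contra hlt
  push_neg at hlt
  set N := ‖A‖ with hN
  obtain ⟨x, hx1, hxA, hxr⟩ := hmem
  have hNw : 0 < N ^ 2 - w ^ 2 := by nlinarith
  set d := Real.sqrt (N ^ 2 - w ^ 2) with hd_def
  have hd2 : d ^ 2 = N ^ 2 - w ^ 2 := Real.sq_sqrt (le_of_lt hNw)
  have hd0 : 0 < d := Real.sqrt_pos.mpr hNw
  set r : ℕ → ℂ := fun n => ⟪A (x n), x n⟫ with hr_def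
  set ds : ℕ → ℝ := fun n => ‖A (x n) - (w : ℂ) • x n‖ with hds_def
  have hxA2 : Tendsto (fun n => ‖A (x n)‖ ^ 2) atTop (𝓝 (N ^ 2)) := hxA.pow 2
  have hrre : Tendsto (fun n => (r n).re) atTop (𝓝 w) := by
    have := (Complex.continuous_re.tendsto _).comp hxr
    simpa [Function.comp_def] using this
  have hds2 : ∀ n, ds n ^ 2 = ‖A (x n)‖ ^ 2 - 2 * (w * (r n).re) + w ^ 2 := by
    intro n
    have h1 : RCLike.re (⟪A (x n), (w:ℂ) • x n⟫) = w * (r n).re := by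
      rw [inner_smul_right]
      simp [hr_def, Complex.re_ofReal_mul]
    have h2 : ‖(w:ℂ) • x n‖ ^ 2 = w ^ 2 := by
      rw [norm_smul, hx1 n, mul_one, Complex.norm_real, Real.norm_eq_abs, sq_abs]
    rw [hds_def]
    simp only []
    rw [norm_sub_sq (𝕜 := ℂ), h1, h2]
  have hds : Tendsto ds atTop (𝓝 d) := by
    have t1 : Tendsto (fun n => ‖A (x n)‖ ^ 2 - 2 * (w * (r n).re) + w ^ 2) atTop
        (𝓝 (N ^ 2 - 2 * (w * w) + w ^ 2)) :=
      (hxA2.sub ((hrre.const_mul w).const_mul 2)).add tendsto_const_nhds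
    have t2 : Tendsto (fun n => ds n ^ 2) atTop (𝓝 (N ^ 2 - w ^ 2)) := by
      have he : N ^ 2 - 2 * (w * w) + w ^ 2 = N ^ 2 - w ^ 2 := by ring
      rw [← he]
      exact t1.congr (fun n => (hds2 n).symm)
    have t3 := t2.sqrt
    rw [← hd_def] at t3
    exact t3.congr (fun n => Real.sqrt_sq (norm_nonneg _))
  have hdsc : Tendsto (fun n => ((ds n : ℂ))) atTop (𝓝 (d : ℂ)) :=
    (Complex.continuous_ofReal.tendsto _).comp hds
  have hdne : (d : ℂ) ≠ 0 := by exact_mod_cast hd0.ne'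
  have hdsinv : Tendsto (fun n => ((ds n : ℂ))⁻¹) atTop (𝓝 ((d : ℂ))⁻¹) := hdsc.inv₀ hdne
  set y : ℕ → H := fun n => ((ds n : ℂ))⁻¹ • (A (x n) - (w : ℂ) • x n) with hy_def
  have hAxy : ∀ n, A (x n) = (w : ℂ) • x n + ((ds n : ℂ)) • y n := by
    intro n
    rcases eq_or_ne (ds n) 0 with h0 | h0
    · have hv : A (x n) - (w : ℂ) • x n = 0 := norm_eq_zero.mp h0
      rw [hy_def]
      simp only [hv, smul_zero, add_zero]
      exact sub_eq_zero.mp hv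
    · rw [hy_def]
      simp only []
      rw [smul_inv_smul₀ (by exact_mod_cast h0)]
      abel
  have hy_norm : ∀ n, ds n ≠ 0 → ‖y n‖ = 1 := by
    intro n h0
    rw [hy_def]
    simp only [norm_smul, norm_inv, Complex.norm_real, Real.norm_eq_abs,
      abs_of_nonneg (norm_nonneg _)]
    rw [abs_of_nonneg (norm_nonneg _ : (0:ℝ) ≤ ds n)]
    exact inv_mul_cancel₀ h0
  have hy_le : ∀ n, ‖y n‖ ≤ 1 := by
    intro n
    rcases eq_or_ne (ds n) 0 with h0 | h0
    · have hv : A (x n) - (w : ℂ) • x n = 0 := norm_eq_zero.mp h0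
      have hy0 : y n = 0 := by
        rw [hy_def]
        simp only [hv, smul_zero]
      rw [hy0, norm_zero]
      norm_num
    · rw [hy_norm n h0]
  have hds_ne : ∀ᶠ n in atTop, ds n ≠ 0 :=
    hds.eventually (eventually_ne_nhds hd0.ne')
  have hy_ev : ∀ᶠ n in atTop, ‖y n‖ = 1 := hds_ne.mono (fun n h => hy_norm n h)
  -- sequences a, b, q, e
  set a : ℕ → ℂ := fun n => ⟪A (x n), y n⟫ with ha_def
  set b : ℕ → ℂ := fun n => ⟪A (y n), x n⟫ with hb_def
  set q : ℕ → ℂ := fun n => ⟪A (y n), y n⟫ with hq_def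
  set e : ℕ → ℂ := fun n => ⟪x n, y n⟫ with he_def
  have ha_eq : ∀ n, a n = ((ds n : ℂ))⁻¹ * (((‖A (x n)‖ ^ 2 : ℝ) : ℂ) - (w : ℂ) * r n) := by
    intro n
    rw [ha_def, hy_def]
    simp only [inner_smul_right, inner_sub_right, inner_self_eq_norm_sq_to_K, hr_def,
      ofReal_to_complex]
    push_cast
    ring
  have ha : Tendsto a atTop (𝓝 (d : ℂ)) := by
    have t1 : Tendsto (fun n => (((‖A (x n)‖ ^ 2 : ℝ) : ℂ) - (w : ℂ) * r n)) atTop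
        (𝓝 (((N ^ 2 : ℝ) : ℂ) - (w : ℂ) * (w : ℂ))) :=
      ((Complex.continuous_ofReal.tendsto _).comp hxA2).sub (hxr.const_mul _)
    have t2 := hdsinv.mul t1
    have h3 : ((d : ℂ))⁻¹ * (((N ^ 2 : ℝ) : ℂ) - (w : ℂ) * (w : ℂ)) = (d : ℂ) := by
      have h4 : (((N ^ 2 : ℝ) : ℂ) - (w : ℂ) * (w : ℂ)) = ((d : ℂ)) ^ 2 := by
        have h5 : ((d : ℂ)) ^ 2 = (((d ^ 2 : ℝ)) : ℂ) := by push_cast; ring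
        rw [h5, hd2]
        push_cast
        ring
      rw [h4]
      field_simp
    rw [h3] at t2
    exact t2.congr (fun n => (ha_eq n).symm)
  have he_eq : ∀ n, e n = ((ds n : ℂ))⁻¹ * ((starRingEnd ℂ) (r n) - (w : ℂ)) := by
    intro n
    have hxx : ⟪x n, x n⟫ = 1 := by
      rw [inner_self_eq_norm_sq_to_K, hx1 n]
      norm_num
    have hxAx : ⟪x n, A (x n)⟫ = (starRingEnd ℂ) (r n) := by
      rw [hr_def]
      simp only []
      rw [inner_conj_symm]
    rw [he_def, hy_def]
    simp only [inner_smul_right, inner_sub_right, hxAx, hxx]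
    push_cast
    ring
  have he : Tendsto e atTop (𝓝 0) := by
    have t1 : Tendsto (fun n => ((starRingEnd ℂ) (r n) - (w : ℂ))) atTop (𝓝 0) := by
      have : Tendsto (fun n => (starRingEnd ℂ) (r n)) atTop (𝓝 ((starRingEnd ℂ) ((w:ℝ):ℂ))) :=
        (Complex.continuous_conj.tendsto _).comp hxr
      rw [Complex.conj_ofReal] at this
      simpa using this.sub (tendsto_const_nhds (x := ((w:ℝ):ℂ)))
    have t2 := hdsinv.mul t1
    rw [mul_zero] at t2
    exact t2.congr (fun n => (he_eq n).symm)
  have hb_bdd : ∀ n, b n ∈ Metric.closedBall (0 : ℂ) N := by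
    intro n
    rw [Metric.mem_closedBall, dist_zero_right]
    calc ‖b n‖ ≤ ‖A (y n)‖ * ‖x n‖ := norm_inner_le_norm _ _
      _ = ‖A (y n)‖ := by rw [hx1 n, mul_one]
      _ ≤ N * ‖y n‖ := A.le_opNorm _
      _ ≤ N := by
          have hN0 : (0:ℝ) ≤ N := norm_nonneg A
          nlinarith [hy_le n, norm_nonneg (y n)]
  have hq_bdd : ∀ n, ‖(q n)‖ ≤ w := by
    intro n
    calc ‖(q n)‖ ≤ w * ‖y n‖ ^ 2 := hb (y n)
      _ ≤ w * 1 ^ 2 := by gcongr; exact hy_le n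
      _ = w := by ring
  -- subsequence extraction for b and q
  obtain ⟨bl, -, φ, hφ, hbφ⟩ := tendsto_subseq_of_bounded Metric.isBounded_closedBall hb_bdd
  have hq_bdd' : ∀ n, q (φ n) ∈ Metric.closedBall (0 : ℂ) w := by
    intro n
    rw [Metric.mem_closedBall, dist_zero_right]
    exact hq_bdd (φ n)
  obtain ⟨ql, -, ψ, hψ, hqψ⟩ := tendsto_subseq_of_bounded Metric.isBounded_closedBall hq_bdd'
  set σ : ℕ → ℕ := φ ∘ ψ with hσ_def
  have hσ : Tendsto σ atTop atTop := (hφ.comp hψ).tendsto_atTop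
  have hbσ : Tendsto (fun n => b (σ n)) atTop (𝓝 bl) := hbφ.comp hψ.tendsto_atTop
  have hqσ : Tendsto (fun n => q (σ n)) atTop (𝓝 ql) := hqψ
  -- the defect vectors g n = A* A x n - N² x n tend to zero
  set T := ContinuousLinearMap.adjoint A with hT_def
  have hTnorm : ‖T‖ = N := by
    rw [hT_def, hN]
    exact LinearIsometryEquiv.norm_map ContinuousLinearMap.adjoint A
  set g : ℕ → H := fun n => T (A (x n)) - ((N ^ 2 : ℝ) : ℂ) • x n with hg_def
  have hgsq : ∀ n, ‖g n‖ ^ 2 ≤ N ^ 4 - N ^ 2 * ‖A (x n)‖ ^ 2 := by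
    intro n
    have h1 : RCLike.re (⟪T (A (x n)), ((N ^ 2 : ℝ) : ℂ) • x n⟫) = N ^ 2 * ‖A (x n)‖ ^ 2 := by
      rw [inner_smul_right, hT_def, ContinuousLinearMap.adjoint_inner_left,
        inner_self_eq_norm_sq_to_K]
      simp [ofReal_to_complex, Complex.re_ofReal_mul, ← Complex.ofReal_pow]
    have h2 : ‖((N ^ 2 : ℝ) : ℂ) • x n‖ ^ 2 = N ^ 4 := by
      rw [norm_smul, hx1 n, mul_one, Complex.norm_real, Real.norm_eq_abs,
        abs_of_nonneg (by positivity)]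
      ring
    have h3 : ‖T (A (x n))‖ ^ 2 ≤ N ^ 2 * ‖A (x n)‖ ^ 2 := by
      have h4 := T.le_opNorm (A (x n))
      rw [hTnorm] at h4
      nlinarith [norm_nonneg (T (A (x n))), norm_nonneg (A (x n)), norm_nonneg A]
    have h5 : ‖g n‖ ^ 2 = ‖T (A (x n))‖ ^ 2 - 2 * (N ^ 2 * ‖A (x n)‖ ^ 2) + N ^ 4 := by
      rw [hg_def]
      simp only []
      rw [norm_sub_sq (𝕜 := ℂ), h1, h2]
    nlinarith [h3, h5]
  have hgnorm : Tendsto (fun n => ‖g n‖) atTop (𝓝 0) := by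
    have hgt : Tendsto (fun n => N ^ 4 - N ^ 2 * ‖A (x n)‖ ^ 2) atTop
        (𝓝 (N ^ 4 - N ^ 2 * (N^2))) := tendsto_const_nhds.sub (hxA2.const_mul _)
    have hz : N ^ 4 - N ^ 2 * (N^2) = 0 := by ring
    rw [hz] at hgt
    have hg0 : Tendsto (fun n => ‖g n‖ ^ 2) atTop (𝓝 0) :=
      squeeze_zero (fun n => sq_nonneg _) hgsq hgt
    have h5 := hg0.sqrt
    rw [Real.sqrt_zero] at h5
    exact h5.congr (fun n => Real.sqrt_sq (norm_nonneg _))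
  -- the relation w * bl + d * ql = 0
  have hFn : ∀ n, ⟪A (y n), A (x n)⟫ = (w : ℂ) * b n + ((ds n : ℂ)) * q n := by
    intro n
    conv_lhs => rw [hAxy n]
    rw [inner_add_right, inner_smul_right, inner_smul_right]
  have hTg : ∀ n, T (A (x n)) = g n + ((N ^ 2 : ℝ) : ℂ) • x n := by
    intro n
    rw [hg_def]
    simp only []
    abel
  have hyx_conj : ∀ n, ⟪y n, x n⟫ = (starRingEnd ℂ) (e n) := by
    intro n
    rw [he_def]
    simp only []
    rw [inner_conj_symm]
  have hFn2 : ∀ n, ⟪A (y n), A (x n)⟫ = ⟪y n, g n⟫ + ((N ^ 2 : ℝ) : ℂ) * (starRingEnd ℂ) (e n) := by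
    intro n
    rw [← ContinuousLinearMap.adjoint_inner_right A (y n) (A (x n)), ← hT_def, hTg n,
      inner_add_right, inner_smul_right, hyx_conj n]
  have hrel : (w : ℂ) * bl + (d : ℂ) * ql = 0 := by
    have t1 : Tendsto (fun n => (w : ℂ) * b (σ n) + ((ds (σ n) : ℂ)) * q (σ n)) atTop
        (𝓝 ((w : ℂ) * bl + (d : ℂ) * ql)) :=
      (hbσ.const_mul _).add ((hdsc.comp hσ).mul hqσ)
    have t3 : Tendsto (fun n => ⟪y n, g n⟫) atTop (𝓝 (0:ℂ)) := by
      apply squeeze_zero_norm (a := fun n => ‖g n‖) _ hgnorm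
      intro n
      calc ‖⟪y n, g n⟫‖ ≤ ‖y n‖ * ‖g n‖ := norm_inner_le_norm _ _
        _ ≤ ‖g n‖ := by nlinarith [hy_le n, norm_nonneg (g n), norm_nonneg (y n)]
    have t4 : Tendsto (fun n => (starRingEnd ℂ) (e n)) atTop (𝓝 0) := by
      have := (Complex.continuous_conj.tendsto _).comp he
      simpa [Function.comp_def] using this
    have t2 : Tendsto (fun n => ⟪y (σ n), g (σ n)⟫
        + ((N ^ 2 : ℝ) : ℂ) * (starRingEnd ℂ) (e (σ n))) atTop (𝓝 0) := by
      have := (t3.comp hσ).add ((t4.comp hσ).const_mul ((N ^ 2 : ℝ) : ℂ))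
      simpa using this
    exact tendsto_nhds_unique (t1.congr (fun n => (hFn (σ n)).symm))
      (t2.congr (fun n => (hFn2 (σ n)).symm))
  -- the constraint inequality
  have hy1 : Tendsto (fun n => ‖y n‖) atTop (𝓝 1) :=
    tendsto_const_nhds.congr' (hy_ev.mono fun n h => h.symm)
  have hcon : ∀ c : ℂ, ‖((w : ℂ) + c * (d : ℂ) + (starRingEnd ℂ) c * bl
      + ((starRingEnd ℂ) c * c) * ql)‖ ≤ w * (1 + ‖c‖ ^ 2) := by
    intro c
    have key : ∀ n, ‖(r n + c * a n + (starRingEnd ℂ) c * b n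
        + ((starRingEnd ℂ) c * c) * q n)‖ ≤ w * (1 + 2 * (c * e n).re + ‖c‖ ^ 2 * ‖y n‖ ^ 2) := by
      intro n
      have hinner : ⟪A (x n + c • y n), x n + c • y n⟫
          = r n + c * a n + (starRingEnd ℂ) c * b n + ((starRingEnd ℂ) c * c) * q n := by
        simp only [map_add, map_smul, inner_add_left, inner_add_right, inner_smul_left,
          inner_smul_right, hr_def, ha_def, hb_def, hq_def]
        ring
      have hnorm : ‖x n + c • y n‖ ^ 2 = 1 + 2 * (c * e n).re + ‖c‖ ^ 2 * ‖y n‖ ^ 2 := by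
        rw [norm_add_sq (𝕜 := ℂ), inner_smul_right, norm_smul, hx1 n]
        simp only [he_def, RCLike.re_to_complex, one_pow, mul_pow]
      calc ‖(r n + c * a n + (starRingEnd ℂ) c * b n
            + ((starRingEnd ℂ) c * c) * q n)‖
          = ‖⟪A (x n + c • y n), x n + c • y n⟫‖ := by rw [hinner]
        _ ≤ w * ‖x n + c • y n‖ ^ 2 := hb _
        _ = w * (1 + 2 * (c * e n).re + ‖c‖ ^ 2 * ‖y n‖ ^ 2) := by rw [hnorm]
    have tL : Tendsto (fun n => ‖(r (σ n) + c * a (σ n)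
        + (starRingEnd ℂ) c * b (σ n) + ((starRingEnd ℂ) c * c) * q (σ n))‖) atTop
        (𝓝 (‖((w : ℂ) + c * (d : ℂ) + (starRingEnd ℂ) c * bl
          + ((starRingEnd ℂ) c * c) * ql)‖)) := by
      apply (continuous_norm.tendsto _).comp
      exact (((hxr.comp hσ).add ((ha.comp hσ).const_mul c)).add
        (hbσ.const_mul _)).add (hqσ.const_mul _)
    have tR : Tendsto (fun n => w * (1 + 2 * (c * e (σ n)).re + ‖c‖ ^ 2 * ‖y (σ n)‖ ^ 2)) atTop
        (𝓝 (w * (1 + ‖c‖ ^ 2))) := by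
      have tE : Tendsto (fun n => (c * e (σ n)).re) atTop (𝓝 0) := by
        have h1 : Tendsto (fun n => c * e (σ n)) atTop (𝓝 0) := by
          have := (he.comp hσ).const_mul c
          simpa using this
        have := (Complex.continuous_re.tendsto _).comp h1
        simpa [Function.comp_def] using this
      have tY : Tendsto (fun n => ‖c‖ ^ 2 * ‖y (σ n)‖ ^ 2) atTop (𝓝 (‖c‖ ^ 2)) := by
        have := ((hy1.comp hσ).pow 2).const_mul (‖c‖ ^ 2)
        simpa using this
      have := ((tendsto_const_nhds (x := (1:ℝ))).add (tE.const_mul 2)).add tY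
      have h2 := this.const_mul w
      have h3 : (1 + 2 * (0:ℝ)) + ‖c‖ ^ 2 = 1 + ‖c‖ ^ 2 := by ring
      rw [h3] at h2
      exact h2.congr (fun n => by ring)
    exact le_of_tendsto_of_tendsto' tL tR (fun n => key (σ n))
  -- bound for ql
  have hql : ‖ql‖ ≤ w :=
    le_of_tendsto ((continuous_norm.tendsto _).comp hqσ)
      (Eventually.of_forall fun n => hq_bdd _)
  -- Step A : re (d + bl) = 0
  have hstepA : ((d : ℂ) + bl).re = 0 := by
    have h1 : ∀ t : ℝ, t * ((d : ℂ) + bl).re ≤ 2 * w * t ^ 2 := by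
      intro t
      have h2 := hcon ((t : ℝ) : ℂ)
      rw [Complex.conj_ofReal] at h2
      have hnc : ‖((t : ℝ) : ℂ)‖ ^ 2 = t ^ 2 := by
        rw [Complex.norm_real, Real.norm_eq_abs, sq_abs]
      rw [hnc] at h2
      have h3 : ((w : ℂ) + (t : ℂ) * (d : ℂ) + (t : ℂ) * bl + ((t : ℂ) * (t : ℂ)) * ql).re
          ≤ w * (1 + t ^ 2) := le_trans (Complex.re_le_norm _) h2
      have h4 : ((w : ℂ) + (t : ℂ) * (d : ℂ) + (t : ℂ) * bl + ((t : ℂ) * (t : ℂ)) * ql).re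
          = w + t * d + t * bl.re + (t * t) * ql.re := by
        simp [Complex.add_re, Complex.mul_re, Complex.ofReal_re, Complex.ofReal_im,
          Complex.mul_im]
      rw [h4] at h3
      have h5 : |ql.re| ≤ w := le_trans (Complex.abs_re_le_norm ql) hql
      have h6 := abs_le.mp h5
      have h7 : ((d : ℂ) + bl).re = d + bl.re := by
        simp [Complex.add_re, Complex.ofReal_re]
      rw [h7]
      nlinarith [h3, mul_nonneg (sq_nonneg t) (show (0:ℝ) ≤ ql.re + w by linarith [h6.1])]
    by_contra hr0ne
    have h7 : (0:ℝ) < 4 * w + 1 := by linarith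
    set r0 := ((d : ℂ) + bl).re with hr0_def
    set t := r0 / (4 * w + 1) with ht_def
    have htne : t ≠ 0 := div_ne_zero hr0ne h7.ne'
    have ht2 : 0 < t ^ 2 := by positivity
    have htr : t * (4 * w + 1) = r0 := by
      rw [ht_def]
      field_simp
    have h9 : t * r0 = t ^ 2 * (4 * w + 1) := by rw [← htr]; ring
    have h6 := h1 t
    nlinarith [h6, h9, ht2, hw]
  have hblre : bl.re = -d := by
    have := hstepA
    simp only [Complex.add_re, Complex.ofReal_re] at this
    linarith
  -- Step B : re ql = w
  have hstepB : ql.re = w := by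
    have h1 : w * bl.re + d * ql.re = 0 := by
      have h2 := congrArg Complex.re hrel
      simpa [Complex.add_re, Complex.re_ofReal_mul, Complex.zero_re] using h2
    rw [hblre] at h1
    have h3 : d * ql.re = d * w := by linarith
    exact mul_left_cancel₀ hd0.ne' h3
  -- Step C : contradiction using c = I and c = -I
  have habsF : ∀ z : ℂ, ‖z‖ ≤ 2 * w → z.re ^ 2 + z.im ^ 2 ≤ 4 * w ^ 2 := by
    intro z hz
    have h1 : ‖z‖ ^ 2 ≤ (2 * w) ^ 2 := by
      nlinarith [norm_nonneg z]
    rw [Complex.sq_norm, Complex.normSq_apply] at h1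
    nlinarith [h1]
  have hIa : ‖((w : ℂ) + Complex.I * (d : ℂ) + (starRingEnd ℂ) Complex.I * bl
      + ((starRingEnd ℂ) Complex.I * Complex.I) * ql)‖ ≤ 2 * w := by
    have := hcon Complex.I
    rw [show ‖Complex.I‖ = 1 by simp] at this
    calc ‖_‖ ≤ w * (1 + 1 ^ 2) := this
      _ = 2 * w := by ring
  have hIb : ‖((w : ℂ) + (-Complex.I) * (d : ℂ)
      + (starRingEnd ℂ) (-Complex.I) * bl
      + ((starRingEnd ℂ) (-Complex.I) * (-Complex.I)) * ql)‖ ≤ 2 * w := by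
    have := hcon (-Complex.I)
    rw [show ‖(-Complex.I)‖ = 1 by simp] at this
    calc ‖_‖ ≤ w * (1 + 1 ^ 2) := this
      _ = 2 * w := by ring
  have hsq1 := habsF _ hIa
  have hsq2 := habsF _ hIb
  have hre1 : ((w : ℂ) + Complex.I * (d : ℂ) + (starRingEnd ℂ) Complex.I * bl
      + ((starRingEnd ℂ) Complex.I * Complex.I) * ql).re = w + bl.im + ql.re := by
    simp [Complex.conj_I, Complex.add_re, Complex.mul_re, Complex.I_re, Complex.I_im,
      Complex.ofReal_re, Complex.ofReal_im, Complex.neg_re, Complex.neg_im]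
    try ring
  have him1 : ((w : ℂ) + Complex.I * (d : ℂ) + (starRingEnd ℂ) Complex.I * bl
      + ((starRingEnd ℂ) Complex.I * Complex.I) * ql).im = d - bl.re + ql.im := by
    simp [Complex.conj_I, Complex.add_im, Complex.mul_im, Complex.mul_re, Complex.I_re,
      Complex.I_im, Complex.ofReal_re, Complex.ofReal_im, Complex.neg_re, Complex.neg_im]
    try ring
  have hre2 : ((w : ℂ) + (-Complex.I) * (d : ℂ) + (starRingEnd ℂ) (-Complex.I) * bl
      + ((starRingEnd ℂ) (-Complex.I) * (-Complex.I)) * ql).re = w - bl.im + ql.re := by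
    simp [Complex.conj_I, Complex.add_re, Complex.mul_re, Complex.mul_im, Complex.I_re,
      Complex.I_im, Complex.ofReal_re, Complex.ofReal_im, Complex.neg_re, Complex.neg_im]
    try ring
  have him2 : ((w : ℂ) + (-Complex.I) * (d : ℂ) + (starRingEnd ℂ) (-Complex.I) * bl
      + ((starRingEnd ℂ) (-Complex.I) * (-Complex.I)) * ql).im = -d + bl.re + ql.im := by
    simp [Complex.conj_I, Complex.add_im, Complex.mul_im, Complex.mul_re, Complex.I_re,
      Complex.I_im, Complex.ofReal_re, Complex.ofReal_im, Complex.neg_re, Complex.neg_im]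
    try ring
  rw [hre1, him1] at hsq1
  rw [hre2, him2] at hsq2
  rw [hblre, hstepB] at hsq1 hsq2
  nlinarith [hsq1, hsq2, hd0, sq_nonneg bl.im, sq_nonneg ql.im, sq_nonneg d, mul_pos hd0 hd0]

end core

theorem normaloid_iff_maxNumRadius_eq_numRadius {H : Type*}
    [NormedAddCommGroup H] [InnerProductSpace ℂ H] [CompleteSpace H]
    [Nontrivial H] (A : H →L[ℂ] H) :
    sSup ((fun z : ℂ => ‖z‖) '' numRange A) = ‖A‖ ↔
      sSup ((fun z : ℂ => ‖z‖) '' maxNumRange A) = sSup ((fun z : ℂ => ‖z‖) '' numRange A) := by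
  set wA := sSup ((fun z : ℂ => ‖z‖) '' numRange A) with hwA_def
  have hne : ((fun z : ℂ => ‖z‖) '' numRange A).Nonempty := (numRange_nonempty A).image _
  have hbdd : BddAbove ((fun z : ℂ => ‖z‖) '' numRange A) := by
    refine ⟨‖A‖, ?_⟩
    rintro t ⟨z, hz, rfl⟩
    exact abs_mem_numRange_le A hz
  have hwA_le : wA ≤ ‖A‖ := csSup_le hne (by rintro t ⟨z, hz, rfl⟩; exact abs_mem_numRange_le A hz)
  have hwA_nonneg : 0 ≤ wA := by
    obtain ⟨t, ht⟩ := hne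
    have h1 := le_csSup hbdd ht
    obtain ⟨z, hz, rfl⟩ := ht
    exact le_trans (norm_nonneg z) h1
  have hUnit : ∀ x : H, ‖x‖ = 1 → ‖(inner ℂ (A x) x : ℂ)‖ ≤ wA := by
    intro x hx
    exact le_csSup hbdd ⟨_, ⟨x, hx, rfl⟩, rfl⟩
  have hbddM : BddAbove ((fun z : ℂ => ‖z‖) '' maxNumRange A) := by
    refine ⟨‖A‖, ?_⟩
    rintro t ⟨z, hz, rfl⟩
    exact abs_mem_maxNumRange_le A hz
  have hM_le : sSup ((fun z : ℂ => ‖z‖) '' maxNumRange A) ≤ wA := by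
    apply Real.sSup_le _ hwA_nonneg
    rintro t ⟨z, hz, rfl⟩
    exact abs_mem_maxNumRange_le_of_bound A hUnit hz
  constructor
  · intro h
    refine le_antisymm hM_le ?_
    have key : ∀ n : ℕ, ∃ x : H, ‖x‖ = 1 ∧
        wA - 1/((n:ℝ)+1) < ‖(inner ℂ (A x) x : ℂ)‖ := by
      intro n
      have hlt : wA - 1/((n:ℝ)+1) < wA := by
        have : (0:ℝ) < 1/((n:ℝ)+1) := by positivity
        linarith
      obtain ⟨t, ht, hlt2⟩ := exists_lt_of_lt_csSup hne hlt
      obtain ⟨z, hz, rfl⟩ := ht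
      obtain ⟨x, hx, rfl⟩ := hz
      exact ⟨x, hx, hlt2⟩
    choose x hx1 hx2 using key
    have habs_tend : Tendsto (fun n => ‖(inner ℂ (A (x n)) (x n) : ℂ)‖) atTop (𝓝 wA) := by
      apply tendsto_of_tendsto_of_tendsto_of_le_of_le
        (g := fun n : ℕ => wA - 1/((n:ℝ)+1)) (h := fun _ : ℕ => wA)
      · simpa using (tendsto_const_nhds (x := wA)).sub one_div_succ_tendsto
      · exact tendsto_const_nhds
      · exact fun n => le_of_lt (hx2 n)
      · exact fun n => hUnit _ (hx1 n)
    have hnorm_tend : Tendsto (fun n => ‖A (x n)‖) atTop (𝓝 ‖A‖) := by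
      rw [← h]
      apply tendsto_of_tendsto_of_tendsto_of_le_of_le habs_tend tendsto_const_nhds
      · intro n
        have h2 := norm_inner_le_norm (𝕜 := ℂ) (A (x n)) (x n)
        rw [hx1 n, mul_one] at h2
        exact h2
      · intro n
        have h2 := A.le_opNorm (x n)
        rw [hx1 n, mul_one] at h2
        rw [← h] at h2
        exact h2
    obtain ⟨lam, hlam, φ, hφ, hlim⟩ := exists_mem_maxNumRange_of_seq A x hx1 hnorm_tend
    have hlam_abs : ‖lam‖ = wA := by
      have h1 : Tendsto (fun n => ‖(inner ℂ (A (x (φ n))) (x (φ n)) : ℂ)‖) atTop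
          (𝓝 (‖lam‖)) := (continuous_norm.tendsto _).comp hlim
      exact tendsto_nhds_unique h1 (habs_tend.comp hφ.tendsto_atTop)
    calc wA = ‖lam‖ := hlam_abs.symm
      _ ≤ sSup ((fun z : ℂ => ‖z‖) '' maxNumRange A) := le_csSup hbddM ⟨lam, hlam, rfl⟩
  · intro h
    refine le_antisymm hwA_le ?_
    have hMne : (maxNumRange A).Nonempty := maxNumRange_nonempty A
    have key : ∀ n : ℕ, ∃ z ∈ maxNumRange A, wA - 1/((n:ℝ)+1) < ‖z‖ := by
      intro n
      have hlt : wA - 1/((n:ℝ)+1) < sSup ((fun z : ℂ => ‖z‖) '' maxNumRange A) := by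
        rw [h]
        have : (0:ℝ) < 1/((n:ℝ)+1) := by positivity
        linarith
      obtain ⟨t, ht, hlt2⟩ := exists_lt_of_lt_csSup (hMne.image _) hlt
      obtain ⟨z, hz, rfl⟩ := ht
      exact ⟨z, hz, hlt2⟩
    choose z hz1 hz2 using key
    have hzb : ∀ n, z n ∈ Metric.closedBall (0:ℂ) ‖A‖ := by
      intro n
      rw [Metric.mem_closedBall, dist_zero_right]
      exact abs_mem_maxNumRange_le A (hz1 n)
    obtain ⟨mu, -, φ, hφ, hmu⟩ := tendsto_subseq_of_bounded Metric.isBounded_closedBall hzb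
    have hmu_mem : mu ∈ maxNumRange A :=
      maxNumRange_mem_of_tendsto A (z ∘ φ) (fun n => hz1 _) hmu
    have hmu_abs : ‖mu‖ = wA := by
      have h1 : Tendsto (fun n => ‖(z (φ n))‖) atTop (𝓝 (‖mu‖)) :=
        (continuous_norm.tendsto _).comp hmu
      apply tendsto_nhds_unique h1
      apply tendsto_of_tendsto_of_tendsto_of_le_of_le
        (g := fun n : ℕ => wA - 1/(((φ n):ℝ)+1)) (h := fun _ : ℕ => wA)
      · have h2 : Tendsto (fun n : ℕ => wA - 1/((n:ℝ)+1)) atTop (𝓝 wA) := by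
          simpa using (tendsto_const_nhds (x := wA)).sub one_div_succ_tendsto
        exact h2.comp hφ.tendsto_atTop
      · exact tendsto_const_nhds
      · exact fun n => le_of_lt (hz2 (φ n))
      · exact fun n => abs_mem_maxNumRange_le_of_bound A hUnit (hz1 (φ n))
    have hquad : ∀ v : H, ‖(inner ℂ (A v) v : ℂ)‖ ≤ wA * ‖v‖ ^ 2 :=
      quad_bound A hUnit
    rcases eq_or_lt_of_le hwA_nonneg with hw0 | hw0
    · -- wA = 0
      have hmu0 : mu = 0 := by
        have h0 : ‖mu‖ = 0 := by rw [hmu_abs, ← hw0]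
        exact norm_eq_zero.mp h0
      have hmem : ((wA : ℝ) : ℂ) ∈ maxNumRange A := by
        rw [← hw0]
        rw [hmu0] at hmu_mem
        simpa using hmu_mem
      exact core_lemma A hwA_nonneg hmem hquad
    · -- wA > 0
      set u : ℂ := mu / (wA : ℂ) with hu_def
      have hwAc : ((wA : ℝ) : ℂ) ≠ 0 := by exact_mod_cast hw0.ne'
      have hu_abs : ‖u‖ = 1 := by
        rw [hu_def, norm_div, hmu_abs, Complex.norm_real, Real.norm_eq_abs, abs_of_pos hw0, div_self hw0.ne']
      set B : H →L[ℂ] H := u • A with hB_def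
      have hBapp : ∀ v : H, B v = u • A v := fun v => rfl
      have hBnorm : ‖B‖ = ‖A‖ := by
        rw [hB_def, norm_smul, hu_abs, one_mul]
      have hconj_mu : (starRingEnd ℂ) u * mu = ((wA : ℝ) : ℂ) := by
        rw [hu_def, map_div₀, Complex.conj_ofReal]
        rw [div_mul_eq_mul_div]
        have h2 : (starRingEnd ℂ) mu * mu = ((wA ^ 2 : ℝ) : ℂ) := by
          have h3 : mu * (starRingEnd ℂ) mu = ((Complex.normSq mu : ℝ) : ℂ) := Complex.mul_conj mu
          rw [mul_comm] at h3
          rw [h3, ← Complex.sq_norm, hmu_abs]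
        rw [h2]
        push_cast
        field_simp
      have hmemB : ((wA : ℝ) : ℂ) ∈ maxNumRange B := by
        obtain ⟨xs, hxs1, hxs2, hxs3⟩ := hmu_mem
        refine ⟨xs, hxs1, ?_, ?_⟩
        · rw [hBnorm]
          have h4 : ∀ n, ‖B (xs n)‖ = ‖A (xs n)‖ := by
            intro n
            rw [hBapp, norm_smul, hu_abs, one_mul]
          exact hxs2.congr (fun n => (h4 n).symm)
        · have h5 : ∀ n, (inner ℂ (B (xs n)) (xs n) : ℂ)
              = (starRingEnd ℂ) u * (inner ℂ (A (xs n)) (xs n) : ℂ) := by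
            intro n
            rw [hBapp, inner_smul_left]
          have h6 := hxs3.const_mul ((starRingEnd ℂ) u)
          rw [hconj_mu] at h6
          exact h6.congr (fun n => (h5 n).symm)
      have hquadB : ∀ v : H, ‖(inner ℂ (B v) v : ℂ)‖ ≤ wA * ‖v‖ ^ 2 := by
        intro v
        rw [hBapp, inner_smul_left, norm_mul, Complex.norm_conj, hu_abs, one_mul]
        exact hquad v
      have := core_lemma B hwA_nonneg hmemB hquadB
      rwa [hBnorm] at this
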